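/- The matrix R₀ = [[1,0,0,0],[-ξ,1,0,0],[ξ,0,1,0],[ξ²,-ξ,ξ,1]] (the constant part of the deformed rational R-matrix) satisfies the constant quantum Yang–Baxter equation R₀^{12} R₀^{13} R₀^{23} = R₀^{23} R₀^{13} R₀^{12} on ℂ²⊗ℂ²⊗ℂ², and is unipotent with R₀^{21} = R₀^{-1}. -/
import Mathlib


/-- Identification of `Fin 2 × Fin 2` with `Fin 4` in the basis order
`(e₁⊗e₁, e₁⊗e₂, e₂⊗e₁, e₂⊗e₂)`. -/
def idx : Fin 2 × Fin 2 → Fin 4 := fun p =>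
  ⟨p.1.val * 2 + p.2.val, by have h1 := p.1.isLt; have h2 := p.2.isLt; omega⟩

/-- The constant part `R₀` of the deformed rational R-matrix, acting on `ℂ²⊗ℂ²`. -/
def R0 (ξ : ℂ) : Matrix (Fin 2 × Fin 2) (Fin 2 × Fin 2) ℂ :=
  Matrix.of fun p q =>
    (!![1, 0, 0, 0;
        -ξ, 1, 0, 0;
        ξ, 0, 1, 0;
        ξ ^ 2, -ξ, ξ, 1] : Matrix (Fin 4) (Fin 4) ℂ) (idx p) (idx q)

/-- `R¹² = R ⊗ I₂` on `(ℂ²)^⊗3`. -/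
def R12 (M : Matrix (Fin 2 × Fin 2) (Fin 2 × Fin 2) ℂ) :
    Matrix (Fin 2 × Fin 2 × Fin 2) (Fin 2 × Fin 2 × Fin 2) ℂ :=
  Matrix.of fun p q => M (p.1, p.2.1) (q.1, q.2.1) * (if p.2.2 = q.2.2 then 1 else 0)

/-- `R²³ = I₂ ⊗ R` on `(ℂ²)^⊗3`. -/
def R23 (M : Matrix (Fin 2 × Fin 2) (Fin 2 × Fin 2) ℂ) :
    Matrix (Fin 2 × Fin 2 × Fin 2) (Fin 2 × Fin 2 × Fin 2) ℂ :=
  Matrix.of fun p q => (if p.1 = q.1 then 1 else 0) * M (p.2.1, p.2.2) (q.2.1, q.2.2)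

/-- `R¹³` on the first and third factors of `(ℂ²)^⊗3`. -/
def R13 (M : Matrix (Fin 2 × Fin 2) (Fin 2 × Fin 2) ℂ) :
    Matrix (Fin 2 × Fin 2 × Fin 2) (Fin 2 × Fin 2 × Fin 2) ℂ :=
  Matrix.of fun p q => M (p.1, p.2.2) (q.1, q.2.2) * (if p.2.1 = q.2.1 then 1 else 0)

/-- The flip `P` of the two tensor factors of `ℂ²⊗ℂ²`. -/
def Pflip : Matrix (Fin 2 × Fin 2) (Fin 2 × Fin 2) ℂ :=
  Matrix.of fun p q => if p.1 = q.2 ∧ p.2 = q.1 then 1 else 0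

set_option maxHeartbeats 2000000 in
/-- `R₀` satisfies the constant quantum Yang–Baxter equation
`R₀¹² R₀¹³ R₀²³ = R₀²³ R₀¹³ R₀¹²`, is unipotent (`R₀ - 1` is nilpotent), and
`R₀²¹ = P R₀ P` is the inverse of `R₀`. -/
theorem stmt_17 (ξ : ℂ) :
    R12 (R0 ξ) * R13 (R0 ξ) * R23 (R0 ξ) = R23 (R0 ξ) * R13 (R0 ξ) * R12 (R0 ξ) ∧
    IsNilpotent (R0 ξ - 1) ∧
    (Pflip * R0 ξ * Pflip) * R0 ξ = 1 ∧ R0 ξ * (Pflip * R0 ξ * Pflip) = 1 := by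

  refine ⟨?_, ⟨3, ?_⟩, ?_, ?_⟩
  · ext ⟨a, b, c⟩ ⟨d, e, f⟩
    fin_cases a <;> fin_cases b <;> fin_cases c <;> fin_cases d <;> fin_cases e <;> fin_cases f <;>
    · simp [Matrix.mul_apply, Fintype.sum_prod_type, Fin.sum_univ_two, R12, R13, R23, R0, idx]
      try ring_nf
  · ext ⟨a, b⟩ ⟨c, d⟩
    fin_cases a <;> fin_cases b <;> fin_cases c <;> fin_cases d <;>
    · simp [pow_succ, Matrix.mul_apply, Matrix.sub_apply, Matrix.one_apply,
        Fintype.sum_prod_type, Fin.sum_univ_two, R0, idx, Prod.ext_iff]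
      try ring_nf
  · ext ⟨a, b⟩ ⟨c, d⟩
    fin_cases a <;> fin_cases b <;> fin_cases c <;> fin_cases d <;>
    · simp [Matrix.mul_apply, Matrix.one_apply, Fintype.sum_prod_type, Fin.sum_univ_two,
        R0, Pflip, idx, Prod.ext_iff]
      try ring_nf
  · ext ⟨a, b⟩ ⟨c, d⟩
    fin_cases a <;> fin_cases b <;> fin_cases c <;> fin_cases d <;>
    · simp [Matrix.mul_apply, Matrix.one_apply, Fintype.sum_prod_type, Fin.sum_univ_two,
        R0, Pflip, idx, Prod.ext_iff]
      try ring_nf
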